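/- Let d be a differential of degree 1 on E and δ an exact differential of degree −1 on E. Set H = d∘δ + δ∘d, and let a > 0 be such that no eigenvalue λ of H satisfies |λ| = a. Let E_{<a} be the sum of the generalized eigenspaces of H for eigenvalues λ with |λ| < a. Then δ maps E_{<a} into itself, and the restriction of δ to E_{<a} is exact: for every x ∈ E_{<a} with δx = 0 there exists y ∈ E_{<a} with δy = x. (Proposition 2.12.) -/

import Mathlib

/- STATEMENT 10: Let `d` be a degree-1 differential and `δ` an exact degree-(-1) differential,
`H = d∘δ + δ∘d`, and `a > 0` with no eigenvalue of `H` of modulus `a`.  Let `E_{<a}` be the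
sum of the generalized eigenspaces of `H` for eigenvalues of modulus `< a`.  Then `δ` maps
`E_{<a}` into itself and its restriction to `E_{<a}` is exact.

`E` is modelled as a finite-dimensional complex vector space `V` together with a family of
projections `π i` (idempotent, mutually orthogonal, supported in `[p, q]`, summing to `1`),
whose ranges are the graded pieces `E^i`.  An endomorphism `a` has degree `k` iff
`a * π i = π (i + k) * a` for all `i`.  The generalized eigenspace of `H` at `μ` is
`⨆ k, ker (H - μ•1)^k`, and `μ` is an eigenvalue iff `ker (H - μ•1) ≠ ⊥`. -/

open Module LinearMap

/-- Two big sups of an independent family of submodules over disjoint index predicates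
are disjoint. -/
lemma biSup_disjoint_biSup_of_iSupIndep {ι R N : Type*} [DecidableEq ι] [Ring R]
    [AddCommGroup N] [Module R N] {t : ι → Submodule R N} (ht : iSupIndep t)
    (P Q : ι → Prop) [DecidablePred P] [DecidablePred Q] (hPQ : ∀ i, P i → Q i → False) :
    Disjoint (⨆ i, ⨆ (_ : P i), t i) (⨆ i, ⨆ (_ : Q i), t i) := by
  rw [Submodule.disjoint_def]
  intro x hxP hxQ
  rw [Submodule.mem_biSup_iff_exists_dfinsupp] at hxP hxQ
  obtain ⟨f, hf⟩ := hxP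
  obtain ⟨g, hg⟩ := hxQ
  have h := ht.dfinsupp_lsum_injective (hf.trans hg.symm)
  have hzero : f.filter P = 0 := by
    ext i
    by_cases hPi : P i
    · have h2 := DFunLike.congr_fun h i
      rw [DFinsupp.filter_apply, DFinsupp.filter_apply, if_pos hPi,
        if_neg (fun hQi => hPQ i hPi hQi)] at h2
      simp [DFinsupp.filter_apply, if_pos hPi, h2]
    · simp [DFinsupp.filter_apply, if_neg hPi]
  rw [← hf, hzero, map_zero]

lemma genEigLt_aux {V : Type} [AddCommGroup V] [Module ℂ V]
    (H : Module.End ℂ V) (μ : ℂ) :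
    (⨆ k : ℕ, LinearMap.ker ((H - μ • (1 : Module.End ℂ V)) ^ k)) =
      H.maxGenEigenspace μ := by
  simp_rw [← Module.End.genEigenspace_nat, Module.End.iSup_genEigenspace_eq]

/-- The sum of the generalized eigenspaces of `H` for eigenvalues of modulus `< a`. -/
noncomputable def genEigLt {V : Type} [AddCommGroup V] [Module ℂ V]
    (H : Module.End ℂ V) (a : ℝ) : Submodule ℂ V :=
  ⨆ (μ : ℂ) (_ : ‖μ‖ < a), ⨆ k : ℕ,
    LinearMap.ker ((H - μ • (1 : Module.End ℂ V)) ^ k)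

theorem stmt10 {V : Type} [AddCommGroup V] [Module ℂ V] [FiniteDimensional ℂ V]
    (p q : ℤ) (hpq : p ≤ q) (π : ℤ → Module.End ℂ V)
    (hidem : ∀ i, π i * π i = π i)
    (horth : ∀ i j, i ≠ j → π i * π j = 0)
    (hsupp : ∀ i, i ∉ Finset.Icc p q → π i = 0)
    (hsum : ∑ i ∈ Finset.Icc p q, π i = 1)
    (d δ : Module.End ℂ V)
    (hd : ∀ i, d * π i = π (i + 1) * d)
    (hδ : ∀ i, δ * π i = π (i - 1) * δ)
    (hdd : d * d = 0)
    (hδδ : δ * δ = 0)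
    (hδexact : LinearMap.ker δ = LinearMap.range δ)
    (a : ℝ) (ha : 0 < a)
    (hspec : ∀ μ : ℂ,
      LinearMap.ker ((d * δ + δ * d) - μ • (1 : Module.End ℂ V)) ≠ ⊥ →
      ‖μ‖ ≠ a) :
    (∀ x ∈ genEigLt (d * δ + δ * d) a, δ x ∈ genEigLt (d * δ + δ * d) a) ∧
    (∀ x ∈ genEigLt (d * δ + δ * d) a, δ x = 0 →
      ∃ y ∈ genEigLt (d * δ + δ * d) a, δ y = x) := by
  classical
  set H : Module.End ℂ V := d * δ + δ * d with hH
  have hcomm : Commute H δ := by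
    show H * δ = δ * H
    have h1 : (d * δ + δ * d) * δ = δ * (d * δ) := by
      rw [add_mul, mul_assoc, hδδ, mul_zero, zero_add, mul_assoc]
    have h2 : δ * (d * δ + δ * d) = δ * (d * δ) := by
      rw [mul_add, ← mul_assoc δ δ d, hδδ, zero_mul, add_zero]
    rw [hH, h1, h2]
  have hlt : genEigLt H a
      = ⨆ μ, ⨆ (_ : ‖μ‖ < a), H.maxGenEigenspace μ := by
    unfold genEigLt
    simp_rw [genEigLt_aux]
  set Elt : Submodule ℂ V := ⨆ μ, ⨆ (_ : ‖μ‖ < a), H.maxGenEigenspace μ with hElt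
  set Egt : Submodule ℂ V := ⨆ μ, ⨆ (_ : a < ‖μ‖), H.maxGenEigenspace μ with hEgt
  have hmaps : ∀ μ : ℂ, ∀ x ∈ H.maxGenEigenspace μ, δ x ∈ H.maxGenEigenspace μ :=
    fun μ x hx => Module.End.mapsTo_maxGenEigenspace_of_comm hcomm μ hx
  have hδElt : ∀ x ∈ Elt, δ x ∈ Elt := by
    have : Elt ≤ Submodule.comap δ Elt := by
      refine iSup₂_le fun μ hμ x hx => ?_
      exact Submodule.mem_comap.2 <|
        Submodule.mem_iSup_of_mem μ <| Submodule.mem_iSup_of_mem hμ <| hmaps μ x hx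
    exact fun x hx => this hx
  have hδEgt : ∀ x ∈ Egt, δ x ∈ Egt := by
    have : Egt ≤ Submodule.comap δ Egt := by
      refine iSup₂_le fun μ hμ x hx => ?_
      exact Submodule.mem_comap.2 <|
        Submodule.mem_iSup_of_mem μ <| Submodule.mem_iSup_of_mem hμ <| hmaps μ x hx
    exact fun x hx => this hx
  have htop : Elt ⊔ Egt = ⊤ := by
    rw [eq_top_iff, ← Module.End.iSup_maxGenEigenspace_eq_top H]
    refine iSup_le fun μ => ?_
    rcases eq_or_ne (H.maxGenEigenspace μ) ⊥ with hbot | hne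
    · rw [hbot]; exact bot_le
    · have heig : H.HasEigenvalue μ := by
        have h1 : H.HasUnifEigenvalue μ ⊤ := hne
        exact (Module.End.hasUnifEigenvalue_iff_hasUnifEigenvalue_one (by simp)).mp h1
      have hker : LinearMap.ker (H - μ • (1 : Module.End ℂ V)) ≠ ⊥ := by
        rw [← Module.End.eigenspace_def]
        exact heig
      have hne_a : ‖μ‖ ≠ a := hspec μ hker
      rcases hne_a.lt_or_gt with h | h
      · exact le_sup_of_le_left <| le_iSup₂ (f := fun μ _ => H.maxGenEigenspace μ) μ h
      · exact le_sup_of_le_right <| le_iSup₂ (f := fun μ _ => H.maxGenEigenspace μ) μ h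
  have hdisj : Disjoint Elt Egt := by
    refine biSup_disjoint_biSup_of_iSupIndep
      (Module.End.independent_maxGenEigenspace H) _ _ fun μ h1 h2 => ?_
    exact lt_asymm h1 h2
  rw [hlt]
  refine ⟨hδElt, fun x hx hδx => ?_⟩
  have hxker : x ∈ LinearMap.range δ := hδexact ▸ LinearMap.mem_ker.2 hδx
  obtain ⟨y, hy⟩ := hxker
  have hy_mem : y ∈ Elt ⊔ Egt := htop ▸ Submodule.mem_top
  obtain ⟨y1, hy1, y2, hy2, hysum⟩ := Submodule.mem_sup.1 hy_mem
  refine ⟨y1, hy1, ?_⟩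
  have hsplit : x - δ y1 = δ y2 := by
    rw [← hy, ← hysum, map_add]; abel
  have h1 : x - δ y1 ∈ Elt := Submodule.sub_mem _ hx (hδElt y1 hy1)
  have h2 : x - δ y1 ∈ Egt := hsplit ▸ hδEgt y2 hy2
  have : x - δ y1 = 0 := by
    have := hdisj.le_bot ⟨h1, h2⟩
    simpa using this
  rw [sub_eq_zero] at this
  exact this.symm
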